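/- Let n ≥ 1 and let x_1, …, x_n be pairwise distinct positive real numbers. Then x_i·∑_{k≠i} 2/(x_i − x_k) = x_i − 1 holds for all 1 ≤ i ≤ n if and only if the polynomial y(x) = ∏_{k=1}^n (x − x_k) satisfies x·y''(x) + (1 − x)·y'(x) + n·y(x) = 0 identically. -/

import Mathlib

open Polynomial Finset

lemma deriv_prod_lin {ι : Type*} [DecidableEq ι] (c : ι → ℝ) (s : Finset ι) :
    derivative (∏ k ∈ s, (X - C (c k))) = ∑ i ∈ s, ∏ j ∈ s.erase i, (X - C (c j)) := by
  induction s using Finset.induction_on with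
  | empty => simp
  | @insert a s ha ih =>
    rw [Finset.prod_insert ha, derivative_mul, ih, Finset.sum_insert ha]
    simp only [derivative_sub, derivative_X, derivative_C, sub_zero, one_mul]
    rw [Finset.erase_insert ha, Finset.mul_sum]
    congr 1
    refine Finset.sum_congr rfl fun i hi => ?_
    rw [Finset.erase_insert_of_ne (by rintro rfl; exact ha hi), Finset.prod_insert
      (fun h => ha (Finset.mem_of_mem_erase h))]

theorem stmt_14 (n : ℕ) (hn : 1 ≤ n) (x : Fin n → ℝ) (hx : Function.Injective x)
    (hpos : ∀ i, 0 < x i) :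
    (∀ i : Fin n, x i * ∑ k ∈ univ.erase i, 2 / (x i - x k) = x i - 1) ↔
    X * derivative (derivative (∏ k, (X - C (x k))))
      + (1 - X) * derivative (∏ k, (X - C (x k)))
      + C (n : ℝ) * ∏ k, (X - C (x k)) = 0 := by
  classical
  set y : ℝ[X] := ∏ k, (X - C (x k)) with hy
  set P : ℝ[X] := X * derivative (derivative y) + (1 - X) * derivative y + C (n : ℝ) * y with hP
  have hne : ∀ i k : Fin n, i ≠ k → x i - x k ≠ 0 := fun i k h =>
    sub_ne_zero.mpr (fun hc => h (hx hc))
  have hyi : ∀ i, eval (x i) y = 0 := by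
    intro i
    rw [hy, eval_prod]
    exact Finset.prod_eq_zero (mem_univ i) (by simp)
  have hD : ∀ i, eval (x i) (derivative y) = ∏ k ∈ univ.erase i, (x i - x k) := by
    intro i
    rw [hy, deriv_prod_lin, eval_finset_sum]
    rw [Finset.sum_eq_single i]
    · simp [eval_prod]
    · intro b _ hb
      rw [eval_prod]
      refine Finset.prod_eq_zero (Finset.mem_erase.mpr ⟨hb.symm, mem_univ i⟩) (by simp)
    · simp
  have hE1ne : ∀ i, (∏ k ∈ univ.erase i, (x i - x k)) ≠ 0 := by
    intro i
    exact Finset.prod_ne_zero_iff.mpr fun k hk => hne i k (Finset.ne_of_mem_erase hk).symm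
  have hterm : ∀ i b c : Fin n, eval (x i) (∏ j ∈ (univ.erase b).erase c, (X - C (x j)))
      = ∏ j ∈ (univ.erase b).erase c, (x i - x j) := by
    intro i b c; rw [eval_prod]; simp
  have h2 : ∀ i, eval (x i) (derivative (derivative y)) =
      2 * ∑ k ∈ univ.erase i, ∏ j ∈ (univ.erase i).erase k, (x i - x j) := by
    intro i
    rw [hy, deriv_prod_lin, derivative_sum]
    simp only [deriv_prod_lin]
    rw [eval_finset_sum, ← Finset.sum_erase_add _ _ (mem_univ i)]
    have hbi : ∀ b ∈ univ.erase i,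
        eval (x i) (∑ c ∈ (univ.erase b), ∏ j ∈ (univ.erase b).erase c, (X - C (x j)))
          = ∏ j ∈ (univ.erase i).erase b, (x i - x j) := by
      intro b hb
      rw [eval_finset_sum, Finset.sum_eq_single i]
      · rw [hterm, Finset.erase_right_comm]
      · intro c hc hci
        rw [eval_prod]
        refine Finset.prod_eq_zero (Finset.mem_erase.mpr ⟨hci.symm,
          Finset.mem_erase.mpr ⟨(Finset.ne_of_mem_erase hb).symm, mem_univ i⟩⟩) (by simp)
      · intro hni
        exact absurd (Finset.mem_erase.mpr ⟨(Finset.ne_of_mem_erase hb).symm, mem_univ i⟩) hni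
    rw [Finset.sum_congr rfl hbi, eval_finset_sum]
    rw [Finset.sum_congr rfl (fun c _ => hterm i i c)]
    ring
  have key : ∀ i, (x i * ∑ k ∈ univ.erase i, 2 / (x i - x k) = x i - 1) ↔ eval (x i) P = 0 := by
    intro i
    have hev : eval (x i) P =
        x i * (2 * ∑ k ∈ univ.erase i, ∏ j ∈ (univ.erase i).erase k, (x i - x j))
        + (1 - x i) * ∏ k ∈ univ.erase i, (x i - x k) := by
      rw [hP]
      simp only [eval_add, eval_mul, eval_X, eval_sub, eval_one, eval_C, h2 i, hD i, hyi i]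
      ring
    set S := ∑ k ∈ univ.erase i, ∏ j ∈ (univ.erase i).erase k, (x i - x j) with hS
    set E := ∏ k ∈ univ.erase i, (x i - x k) with hE
    have hEne : E ≠ 0 := hE1ne i
    have hsum : (∑ k ∈ univ.erase i, 2 / (x i - x k)) * E = 2 * S := by
      rw [Finset.sum_mul, hS, Finset.mul_sum]
      refine Finset.sum_congr rfl fun k hk => ?_
      have hEk : E = (x i - x k) * ∏ j ∈ (univ.erase i).erase k, (x i - x j) :=
        (Finset.mul_prod_erase _ _ hk).symm
      have h0 := hne i k (Finset.ne_of_mem_erase hk).symm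
      rw [hEk]
      field_simp
    have step : (x i * ∑ k ∈ univ.erase i, 2 / (x i - x k) = x i - 1)
        ↔ x i * (2 * S) = (x i - 1) * E := by
      rw [← mul_left_inj' hEne, mul_assoc, hsum]
    rw [hev, step]
    constructor
    · intro h; linear_combination h
    · intro h; linear_combination h
  constructor
  · intro h
    by_cases hP0 : P = 0
    · exact hP0
    have heval : ∀ i, eval (x i) P = 0 := fun i => (key i).mp (h i)
    have hymon : y.Monic := monic_prod_of_monic _ _ (fun k _ => monic_X_sub_C _)
    have hydeg : y.natDegree = n := by
      rw [hy, natDegree_prod _ _ (fun k _ => X_sub_C_ne_zero _)]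
      simp
    have hcgt : ∀ m, n < m → y.coeff m = 0 := fun m hm =>
      coeff_eq_zero_of_natDegree_lt (hydeg ▸ hm)
    have hcyn : y.coeff n = 1 := by
      have := hymon.coeff_natDegree
      rwa [hydeg] at this
    have hdeg : P.degree < (n : ℕ) := by
      rw [degree_lt_iff_coeff_zero]
      intro m hm
      have hm' : n ≤ m := by exact_mod_cast hm
      obtain ⟨k, rfl⟩ : ∃ k, m = k + 1 :=
        ⟨m - 1, (Nat.succ_pred_eq_of_pos (lt_of_lt_of_le hn hm')).symm⟩
      have hrw : (1 - X : ℝ[X]) * derivative y = derivative y - X * derivative y := by ring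
      rw [hP, hrw]
      simp only [coeff_add, coeff_sub, coeff_X_mul, coeff_C_mul, coeff_derivative]
      have hk2 : y.coeff (k + 1 + 1) = 0 := hcgt _ (by omega)
      rcases eq_or_lt_of_le hm' with hcase | hcase
      · subst hcase
        rw [hk2, hcyn]
        push_cast
        ring
      · rw [hk2, hcgt _ hcase]
        ring
    have hdeg' : P.natDegree < n := (natDegree_lt_iff_degree_lt hP0).mpr hdeg
    exact Polynomial.eq_zero_of_natDegree_lt_card_of_eval_eq_zero P hx heval (by simpa using hdeg')
  · intro h i
    exact (key i).mpr (by rw [h]; simp)
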